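/- Let A ∈ ℝ^{d×d}, B ∈ ℝ^{d×m}, 0 < γ ≤ 1, let Q ∈ ℝ^{d×d} be symmetric positive semidefinite and R ∈ ℝ^{m×m} symmetric positive definite. Define the Riccati iteration from zero: S(0) = 0 and S(j+1) = Q + γAᵀS(j)A − γ²AᵀS(j)B(R + γBᵀS(j)B)⁻¹BᵀS(j)A for j ∈ ℕ. Then every S(j) is symmetric positive semidefinite, every R + γBᵀS(j)B is positive definite (hence invertible), and the sequence is monotone nondecreasing in the Loewner order: S(j) ⪯ S(j+1) for all j ∈ ℕ. -/

import Mathlib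

open Matrix

section RiccatiAux

variable {n p : Type*} [Fintype n] [Fintype p]

lemma psd_smul_aux {γ : ℝ} (hγ : 0 ≤ γ) {X : Matrix n n ℝ} (hX : X.PosSemidef) :
    (γ • X).PosSemidef := by
  refine ⟨?_, fun x => ?_⟩
  · show (γ • X)ᴴ = γ • X
    rw [conjTranspose_smul, star_trivial, hX.1.eq]
  · exact (hX.smul hγ).2 x

lemma psd_conj_aux {X : Matrix n n ℝ} (hX : X.PosSemidef) (C : Matrix n p ℝ) :
    (Cᵀ * X * C).PosSemidef := by
  simpa [conjTranspose_eq_transpose_of_trivial] using hX.conjTranspose_mul_mul_same C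

lemma quad_expand_aux (γ : ℝ) (M V : Matrix p p ℝ) (K W : Matrix p n ℝ)
    (hMT : Mᵀ = M) (h1 : M * (V * W) = W) :
    (K + γ • (V * W))ᵀ * M * (K + γ • (V * W))
      = Kᵀ * M * K + γ • (Kᵀ * W) + γ • (Wᵀ * K) + γ ^ 2 • (Wᵀ * (V * W)) := by
  have h1' : M * (γ • (V * W)) = γ • W := by rw [Matrix.mul_smul, h1]
  have h2 : (γ • (V * W))ᵀ * M = γ • Wᵀ := by
    have h := congrArg Matrix.transpose h1'
    rw [transpose_mul, hMT, transpose_smul] at h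
    exact h
  rw [transpose_add, Matrix.add_mul, Matrix.add_mul, Matrix.mul_add, Matrix.mul_add,
    Matrix.mul_assoc Kᵀ M (γ • (V * W)), h1', Matrix.mul_smul, h2, Matrix.smul_mul,
    Matrix.smul_mul, Matrix.mul_smul, smul_smul, ← pow_two]
  abel

lemma keyId_aux (A : Matrix n n ℝ) (B : Matrix n p ℝ) (γ : ℝ)
    (Q : Matrix n n ℝ) (R : Matrix p p ℝ) (hR : Rᵀ = R)
    (S : Matrix n n ℝ) (hS : Sᵀ = S)
    (V : Matrix p p ℝ)
    (hc1 : ∀ X : Matrix p n ℝ, (R + γ • (Bᵀ * S * B)) * (V * X) = X)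
    (K : Matrix p n ℝ) :
    Q + Kᵀ * R * K + γ • ((A + B * K)ᵀ * S * (A + B * K))
      = (Q + γ • (Aᵀ * S * A) - γ ^ 2 • (Aᵀ * S * B * V * Bᵀ * S * A))
        + (K + γ • (V * (Bᵀ * S * A)))ᵀ * (R + γ • (Bᵀ * S * B))
          * (K + γ • (V * (Bᵀ * S * A))) := by
  have hMT : (R + γ • (Bᵀ * S * B))ᵀ = R + γ • (Bᵀ * S * B) := by
    simp [transpose_add, transpose_smul, transpose_mul, hS, hR, Matrix.mul_assoc]
  have hq := quad_expand_aux γ (R + γ • (Bᵀ * S * B)) V K (Bᵀ * S * A) hMT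
    (hc1 (Bᵀ * S * A))
  rw [hq]
  simp only [Matrix.mul_add, Matrix.add_mul, transpose_add, transpose_mul,
    transpose_transpose, Matrix.smul_mul, Matrix.mul_smul, smul_add, smul_smul, hS,
    Matrix.mul_assoc, pow_two]
  abel

end RiccatiAux

/-- The discounted Riccati iteration started from zero is well defined and monotone
nondecreasing in the Loewner order: every iterate is positive semidefinite, every
`R + γBᵀS(j)B` is positive definite (hence invertible), and `S(j) ⪯ S(j+1)` for all `j`. -/
theorem riccati_iteration_monotone
    {d m : ℕ} (A : Matrix (Fin d) (Fin d) ℝ) (B : Matrix (Fin d) (Fin m) ℝ)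
    (γ : ℝ) (hγ0 : 0 < γ) (hγ1 : γ ≤ 1)
    (Q : Matrix (Fin d) (Fin d) ℝ) (R : Matrix (Fin m) (Fin m) ℝ)
    (hQ : Q.PosSemidef) (hR : R.PosDef)
    (S : ℕ → Matrix (Fin d) (Fin d) ℝ)
    (hS0 : S 0 = 0)
    (hSrec : ∀ j : ℕ, S (j + 1) =
      Q + γ • (Aᵀ * S j * A)
        - (γ ^ 2) • (Aᵀ * S j * B * (R + γ • (Bᵀ * S j * B))⁻¹ * Bᵀ * S j * A)) :
    ∀ j : ℕ, (S j).PosSemidef ∧ (R + γ • (Bᵀ * S j * B)).PosDef ∧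
      (S (j + 1) - S j).PosSemidef := by
  have hRT : Rᵀ = R := by
    have := hR.isHermitian.eq
    rwa [conjTranspose_eq_transpose_of_trivial] at this
  have hMpd : ∀ X : Matrix (Fin d) (Fin d) ℝ, X.PosSemidef →
      (R + γ • (Bᵀ * X * B)).PosDef := fun X hX =>
    hR.add_posSemidef (psd_smul_aux hγ0.le (psd_conj_aux hX B))
  have hMfacts : ∀ X : Matrix (Fin d) (Fin d) ℝ, X.PosSemidef →
      ∀ Y : Matrix (Fin m) (Fin d) ℝ,
        (R + γ • (Bᵀ * X * B)) * ((R + γ • (Bᵀ * X * B))⁻¹ * Y) = Y := by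
    intro X hX Y
    have hdet : IsUnit (R + γ • (Bᵀ * X * B)).det := (hMpd X hX).det_pos.ne'.isUnit
    rw [← Matrix.mul_assoc, Matrix.mul_nonsing_inv _ hdet, Matrix.one_mul]
  have hsymm : ∀ X : Matrix (Fin d) (Fin d) ℝ, X.PosSemidef → Xᵀ = X := by
    intro X hX
    have := hX.isHermitian.eq
    rwa [conjTranspose_eq_transpose_of_trivial] at this
  -- the Riccati map in completed-square form
  have hGform : ∀ j : ℕ, (S j).PosSemidef → ∀ K : Matrix (Fin m) (Fin d) ℝ,
      Q + Kᵀ * R * K + γ • ((A + B * K)ᵀ * S j * (A + B * K))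
        = S (j + 1)
          + (K + γ • ((R + γ • (Bᵀ * S j * B))⁻¹ * (Bᵀ * S j * A)))ᵀ
            * (R + γ • (Bᵀ * S j * B))
            * (K + γ • ((R + γ • (Bᵀ * S j * B))⁻¹ * (Bᵀ * S j * A))) := by
    intro j hj K
    have h := keyId_aux A B γ Q R hRT (S j) (hsymm _ hj)
      (R + γ • (Bᵀ * S j * B))⁻¹ (hMfacts (S j) hj) K
    rw [h, hSrec j]
  -- PSD is preserved by one step
  have hstep : ∀ j : ℕ, (S j).PosSemidef → (S (j + 1)).PosSemidef := by
    intro j hj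
    set K : Matrix (Fin m) (Fin d) ℝ :=
      -(γ • ((R + γ • (Bᵀ * S j * B))⁻¹ * (Bᵀ * S j * A))) with hK
    have h := hGform j hj K
    have hz : K + γ • ((R + γ • (Bᵀ * S j * B))⁻¹ * (Bᵀ * S j * A)) = 0 := by
      rw [hK, neg_add_cancel]
    rw [hz, Matrix.mul_zero, add_zero] at h
    rw [← h]
    exact (hQ.add (psd_conj_aux hR.posSemidef K)).add
      (psd_smul_aux hγ0.le (psd_conj_aux hj (A + B * K)))
  -- monotone step
  have hmono : ∀ j : ℕ, (S j).PosSemidef → (S (j + 1)).PosSemidef →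
      (S (j + 1) - S j).PosSemidef → (S (j + 1 + 1) - S (j + 1)).PosSemidef := by
    intro j hj hj1 hsub
    set K : Matrix (Fin m) (Fin d) ℝ :=
      -(γ • ((R + γ • (Bᵀ * S (j + 1) * B))⁻¹ * (Bᵀ * S (j + 1) * A))) with hK
    have h1 := hGform (j + 1) hj1 K
    have hz : K + γ • ((R + γ • (Bᵀ * S (j + 1) * B))⁻¹ * (Bᵀ * S (j + 1) * A)) = 0 := by
      rw [hK, neg_add_cancel]
    rw [hz, Matrix.mul_zero, add_zero] at h1
    have h2 := hGform j hj K
    set N : Matrix (Fin m) (Fin d) ℝ :=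
      K + γ • ((R + γ • (Bᵀ * S j * B))⁻¹ * (Bᵀ * S j * A)) with hN
    have h2' : S (j + 1)
        = Q + Kᵀ * R * K + γ • ((A + B * K)ᵀ * S j * (A + B * K))
          - Nᵀ * (R + γ • (Bᵀ * S j * B)) * N := by
      rw [h2]; abel
    have hdiff : S (j + 1 + 1) - S (j + 1)
        = γ • ((A + B * K)ᵀ * (S (j + 1) - S j) * (A + B * K))
          + Nᵀ * (R + γ • (Bᵀ * S j * B)) * N := by
      have e : γ • ((A + B * K)ᵀ * (S (j + 1) - S j) * (A + B * K))
          = γ • ((A + B * K)ᵀ * S (j + 1) * (A + B * K))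
            - γ • ((A + B * K)ᵀ * S j * (A + B * K)) := by
        rw [Matrix.mul_sub, Matrix.sub_mul, smul_sub]
      rw [e, ← h1, h2']
      abel
    rw [hdiff]
    exact (psd_smul_aux hγ0.le (psd_conj_aux hsub (A + B * K))).add
      (psd_conj_aux (hMpd (S j) hj).posSemidef N)
  -- main induction
  have main : ∀ j : ℕ, (S j).PosSemidef ∧ (S (j + 1) - S j).PosSemidef := by
    intro j
    induction j with
    | zero =>
      have h0 : (S 0).PosSemidef := by rw [hS0]; exact Matrix.PosSemidef.zero
      refine ⟨h0, ?_⟩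
      have := hstep 0 h0
      rwa [hS0, sub_zero]
    | succ k ih =>
      have hk1 : (S (k + 1)).PosSemidef := hstep k ih.1
      exact ⟨hk1, hmono k ih.1 hk1 ih.2⟩
  intro j
  exact ⟨(main j).1, hMpd (S j) (main j).1, (main j).2⟩
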